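/- Let T(n) denote the number of spanning trees of the fan graph F_{n+1} (hub joined to a path on n vertices). Then T satisfies the recurrence T(n) = 3·T(n-1) - T(n-2) for n ≥ 3, with T(1) = 1 and T(2) = 3. -/

import Mathlib

open SimpleGraph

variable {V : Type*} {G : SimpleGraph V}

/-- In a cycle, the base vertex has two distinct neighbors on the cycle. -/
lemma cycle_two_neighbors {x : V} (c : G.Walk x x) (hc : c.IsCycle) :
    ∃ y z : V, G.Adj x y ∧ G.Adj x z ∧ y ≠ z ∧ y ∈ c.support ∧ z ∈ c.support := by
  have hlen := hc.three_le_length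
  cases c with
  | nil => simp at hlen
  | @cons _ y _ h q =>
    have hq2 : 2 ≤ q.length := by simp [Walk.length_cons] at hlen; omega
    have hqr : ¬ q.reverse.Nil := by
      rw [Walk.not_nil_iff_lt_length]; simp; omega
    obtain ⟨z, h2, q2, hq⟩ := Walk.not_nil_iff.mp hqr
    refine ⟨y, z, h, h2, ?_, ?_, ?_⟩
    · -- y ≠ z : else first edge s(x,y) would repeat in edges
      intro hyz
      have hnd : (Walk.cons h q).edges.Nodup := hc.isCircuit.isTrail.edges_nodup
      rw [Walk.edges_cons, List.nodup_cons] at hnd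
      apply hnd.1
      have : s(x, y) ∈ q.reverse.edges := by rw [hq]; simp [hyz]
      rwa [Walk.edges_reverse, List.mem_reverse] at this
    · simp [Walk.support_cons]
    · have : z ∈ q.reverse.support := by rw [hq, Walk.support_cons]; simp
      rw [Walk.support_reverse, List.mem_reverse] at this
      simp [Walk.support_cons, this]

def fanGraph (n : ℕ) : SimpleGraph (Option (Fin n)) :=
  SimpleGraph.fromRel
    (fun a b => a = none ∨ ∃ i j : Fin n, a = some i ∧ b = some j ∧ (i : ℕ) + 1 = (j : ℕ))

namespace Fan

inductive Dir : Type
  | hub | left | right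
deriving DecidableEq

instance : Fintype Dir := ⟨{.hub, .left, .right}, fun x => by cases x <;> simp⟩

def Valid (n : ℕ) (f : Fin n → Dir) : Prop :=
  (∀ i : Fin n, f i = .left → 0 < (i : ℕ)) ∧
  (∀ i : Fin n, f i = .right → (i : ℕ) + 1 < n) ∧
  (∀ i j : Fin n, (i : ℕ) + 1 = (j : ℕ) → ¬(f i = .right ∧ f j = .left))

variable {n : ℕ}

def target (f : Fin n → Dir) (i : Fin n) : Option (Fin n) :=
  match f i with
  | .hub => none
  | .left => if _ : 0 < (i : ℕ) then some ⟨(i : ℕ) - 1, by have := i.isLt; omega⟩ else none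
  | .right => if h : (i : ℕ) + 1 < n then some ⟨(i : ℕ) + 1, h⟩ else none

def step (f : Fin n → Dir) : Option (Fin n) → Option (Fin n)
  | none => none
  | some i => target f i

lemma fan_adj_hub (i : Fin n) : (fanGraph n).Adj none (some i) := by
  simp [fanGraph, SimpleGraph.fromRel_adj]

lemma fan_adj_path {i j : Fin n} (h : (i : ℕ) + 1 = (j : ℕ)) :
    (fanGraph n).Adj (some i) (some j) := by
  refine ⟨?_, Or.inl (Or.inr ⟨i, j, rfl, rfl, h⟩)⟩
  simp only [ne_eq, Option.some.injEq]
  intro he; rw [he] at h; omega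

lemma fan_adj_classify {i : Fin n} {y : Option (Fin n)} (h : (fanGraph n).Adj (some i) y) :
    y = none ∨ ∃ j : Fin n, y = some j ∧ ((i : ℕ) + 1 = (j : ℕ) ∨ (j : ℕ) + 1 = (i : ℕ)) := by
  rcases y with _ | j
  · exact Or.inl rfl
  · refine Or.inr ⟨j, rfl, ?_⟩
    rcases h with ⟨-, h | h⟩
    · rcases h with h | ⟨i', j', hi, hj, hij⟩
      · simp at h
      · simp only [Option.some.injEq] at hi hj
        subst hi; subst hj; exact Or.inl hij
    · rcases h with h | ⟨i', j', hi, hj, hij⟩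
      · simp at h
      · simp only [Option.some.injEq] at hi hj
        subst hi; subst hj; exact Or.inr hij

lemma target_fan_adj {f : Fin n → Dir} (hf : Valid n f) (i : Fin n) :
    (fanGraph n).Adj (some i) (target f i) := by
  unfold target
  rcases hd : f i with _ | _ | _
  · simp only
    exact (fan_adj_hub i).symm
  · have h0 : 0 < (i : ℕ) := hf.1 i hd
    simp only [dif_pos h0]
    exact (fan_adj_path (by simp; omega)).symm
  · have h1 : (i : ℕ) + 1 < n := hf.2.1 i hd
    simp only [dif_pos h1]
    exact fan_adj_path (by simp)

def parSubgraph {f : Fin n → Dir} (hf : Valid n f) : (fanGraph n).Subgraph where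
  verts := Set.univ
  Adj x y := (∃ i, x = some i ∧ y = target f i) ∨ (∃ i, y = some i ∧ x = target f i)
  adj_sub := by
    rintro x y (⟨i, rfl, rfl⟩ | ⟨i, rfl, rfl⟩)
    · exact target_fan_adj hf i
    · exact (target_fan_adj hf i).symm
  edge_vert := fun _ => trivial
  symm := by
    refine ⟨?_⟩
    rintro x y (h | h)
    · exact Or.inr h
    · exact Or.inl h

section HT

variable {f : Fin n → Dir} (hf : Valid n f)

lemma target_of_hub {i : Fin n} (h : f i = .hub) : target f i = none := by
  unfold target; rw [h]

lemma target_of_left {i : Fin n} (h : f i = .left) (h0 : 0 < (i : ℕ)) :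
    target f i = some ⟨(i : ℕ) - 1, by have := i.isLt; omega⟩ := by
  unfold target; rw [h]; simp [h0]

lemma target_of_right {i : Fin n} (h : f i = .right) (h1 : (i : ℕ) + 1 < n) :
    target f i = some ⟨(i : ℕ) + 1, h1⟩ := by
  unfold target; rw [h]; simp [h1]

include hf

lemma exists_step_none : ∀ x : Option (Fin n), ∃ k, (step f)^[k] x = none := by
  intro x
  rcases x with _ | i
  · exact ⟨0, rfl⟩
  · -- strong induction on measure
    have main : ∀ m : ℕ, ∀ i : Fin n,
        (if f i = .right then n - (i : ℕ) else (i : ℕ)) ≤ m → ∃ k, (step f)^[k] (some i) = none := by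
      intro m
      induction m with
      | zero =>
        intro i hi
        rcases hd : f i with _ | _ | _
        · exact ⟨1, by simp [step, target_of_hub hd]⟩
        · have := hf.1 i hd
          rw [if_neg (by simp [hd])] at hi
          omega
        · have := hf.2.1 i hd
          rw [if_pos hd] at hi
          omega
      | succ m ih =>
        intro i hi
        rcases hd : f i with _ | _ | _
        · exact ⟨1, by simp [step, target_of_hub hd]⟩
        · -- left
          have h0 := hf.1 i hd
          have ht := target_of_left hd h0
          set j : Fin n := ⟨(i : ℕ) - 1, by have := i.isLt; omega⟩ with hj
          rcases hd' : f j with _ | _ | _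
          · exact ⟨2, by simp [step, ht, target_of_hub hd']⟩
          · have h0' := hf.1 j hd'
            obtain ⟨k, hk⟩ := ih j (by rw [if_neg (by simp [hd'])]
                                       rw [if_neg (by simp [hd])] at hi
                                       simp [hj]; omega)
            exact ⟨k + 1, by simpa [step, ht] using hk⟩
          · exact absurd ⟨hd', hd⟩ (hf.2.2 j i (by simp [hj]; omega))
        · -- right
          have h1 := hf.2.1 i hd
          have ht := target_of_right hd h1
          set j : Fin n := ⟨(i : ℕ) + 1, h1⟩ with hj
          rcases hd' : f j with _ | _ | _
          · exact ⟨2, by simp [step, ht, target_of_hub hd']⟩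
          · exact absurd ⟨hd, hd'⟩ (hf.2.2 i j (by simp [hj]))
          · obtain ⟨k, hk⟩ := ih j (by rw [if_pos hd']
                                       rw [if_pos hd] at hi
                                       simp [hj]; omega)
            exact ⟨k + 1, by simpa [step, ht] using hk⟩
    exact main _ i le_rfl

noncomputable def ht (x : Option (Fin n)) : ℕ :=
  Nat.find (exists_step_none hf x)

lemma ht_none : ht hf none = 0 := by
  simp [ht, Nat.find_eq_zero]

lemma ht_step_lt (i : Fin n) : ht hf (target f i) < ht hf (some i) := by
  have h0 : ht hf (some i) ≠ 0 := by
    simp only [ht, ne_eq, Nat.find_eq_zero]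
    simp
  obtain ⟨k, hk⟩ : ∃ k, ht hf (some i) = k + 1 := ⟨ht hf (some i) - 1, by omega⟩
  have hspec : (step f)^[ht hf (some i)] (some i) = none := Nat.find_spec (exists_step_none hf _)
  rw [hk, Function.iterate_succ_apply] at hspec
  have : ht hf (target f i) ≤ k := Nat.find_le hspec
  omega

end HT

section Tree

variable {f : Fin n → Dir} (hf : Valid n f)

lemma parSubgraph_adj_shape {x y : Option (Fin n)} (h : (parSubgraph hf).Adj x y) :
    (∃ i : Fin n, x = some i ∧ y = target f i) ∨ (∃ i : Fin n, y = some i ∧ x = target f i) := h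

lemma parSubgraph_adj_ht {x y : Option (Fin n)} (h : (parSubgraph hf).Adj x y) :
    ht hf y < ht hf x ∨ ht hf x < ht hf y := by
  rcases h with ⟨i, rfl, rfl⟩ | ⟨i, rfl, rfl⟩
  · exact Or.inl (ht_step_lt hf i)
  · exact Or.inr (ht_step_lt hf i)

lemma parSubgraph_adj_target (i : Fin n) :
    (parSubgraph hf).Adj (some i) (target f i) := Or.inl ⟨i, rfl, rfl⟩

/-- The explicit path from any vertex to the hub in `parSubgraph`. -/
lemma exists_path_to_hub :
    ∀ x : Option (Fin n), ∃ w : (parSubgraph hf).coe.Walk ⟨x, trivial⟩ ⟨none, trivial⟩,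
      w.IsPath ∧ (∀ y ∈ w.support, ht hf y.val ≤ ht hf x) ∧
      (∀ i : Fin n, x = some i → w.getVert 1 = ⟨target f i, trivial⟩) := by
  have main : ∀ m : ℕ, ∀ x : Option (Fin n), ht hf x ≤ m →
      ∃ w : (parSubgraph hf).coe.Walk ⟨x, trivial⟩ ⟨none, trivial⟩,
      w.IsPath ∧ (∀ y ∈ w.support, ht hf y.val ≤ ht hf x) ∧
      (∀ i : Fin n, x = some i → w.getVert 1 = ⟨target f i, trivial⟩) := by
    intro m
    induction m with
    | zero =>
      intro x hx
      rcases x with _ | i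
      · exact ⟨Walk.nil, by simp, by simp [Walk.support_nil], by simp⟩
      · have := ht_step_lt hf i; omega
    | succ m ih =>
      intro x hx
      rcases x with _ | i
      · exact ⟨Walk.nil, by simp, by simp [Walk.support_nil], by simp⟩
      · have hlt := ht_step_lt hf i
        obtain ⟨w', hw'p, hw's, -⟩ := ih (target f i) (by omega)
        have hadj : (parSubgraph hf).coe.Adj ⟨some i, trivial⟩ ⟨target f i, trivial⟩ :=
          parSubgraph_adj_target hf i
        refine ⟨Walk.cons hadj w', ?_, ?_, ?_⟩
        · rw [Walk.cons_isPath_iff]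
          refine ⟨hw'p, fun hmem => ?_⟩
          have := hw's _ hmem
          simp only at this
          omega
        · intro y hy
          rw [Walk.support_cons, List.mem_cons] at hy
          rcases hy with rfl | hy
          · exact le_refl _
          · exact le_of_lt (lt_of_le_of_lt (hw's y hy) hlt)
        · intro j hj
          simp only [Option.some.injEq] at hj
          subst hj
          simp [Walk.getVert_cons_succ, Walk.getVert_zero]
  exact fun x => main (ht hf x) x le_rfl

lemma parSubgraph_connected : (parSubgraph hf).coe.Connected := by
  have hreach : ∀ x : (parSubgraph hf).verts,
      (parSubgraph hf).coe.Reachable x ⟨none, trivial⟩ := by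
    rintro ⟨x, hx⟩
    obtain ⟨w, -, -, -⟩ := exists_path_to_hub hf x
    exact w.reachable
  have : Nonempty (parSubgraph hf).verts := ⟨⟨none, trivial⟩⟩
  exact SimpleGraph.Connected.mk fun a b => (hreach a).trans (hreach b).symm

lemma parSubgraph_acyclic : (parSubgraph hf).coe.IsAcyclic := by
  intro v c hc
  -- pick a vertex of maximal height on the cycle
  have hne : c.support.toFinset.Nonempty :=
    ⟨v, List.mem_toFinset.mpr c.start_mem_support⟩
  obtain ⟨x, hxmem, hxmax⟩ :=
    Finset.exists_max_image c.support.toFinset (fun y => ht hf y.val) hne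
  rw [List.mem_toFinset] at hxmem
  have hmax : ∀ y ∈ c.support, ht hf y.val ≤ ht hf x.val := by
    intro y hy; exact hxmax y (List.mem_toFinset.mpr hy)
  -- rotate the cycle to start at x
  have hc' := hc.rotate hxmem
  set c' := c.rotate _ hxmem with hc'def
  have hsupp : ∀ y, y ∈ c'.support → y ∈ c.support := by
    intro y hy
    rw [Walk.support_eq_cons c', List.mem_cons] at hy
    rcases hy with rfl | hy
    · exact hxmem
    · have hperm := Walk.support_rotate c _ hxmem
      have := hperm.perm.mem_iff.mp hy
      rw [Walk.support_eq_cons c]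
      exact List.mem_cons_of_mem _ this
  obtain ⟨y, z, hxy, hxz, hyz, hys, hzs⟩ := cycle_two_neighbors c' hc'
  have hparent : ∀ w : (parSubgraph hf).verts, (parSubgraph hf).coe.Adj x w →
      w ∈ c'.support → w.val = step f x.val := by
    intro w hadj hws
    rcases parSubgraph_adj_shape hf hadj with ⟨i, hx1, hw1⟩ | ⟨i, hw1, hx1⟩
    · rw [hx1]; simpa [step, hw1]
    · exfalso
      have : ht hf x.val < ht hf w.val := by
        rw [hx1, hw1]; exact ht_step_lt hf i
      have := hmax w (hsupp _ hws)
      omega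
  exact hyz (Subtype.ext ((hparent y hxy hys).trans (hparent z hxz hzs).symm))

lemma parSubgraph_isSpanning : (parSubgraph hf).IsSpanning := fun _ => trivial

lemma parSubgraph_isTree : (parSubgraph hf).coe.IsTree :=
  ⟨parSubgraph_connected hf, parSubgraph_acyclic hf⟩

end Tree

section Extract

variable {H : (fanGraph n).Subgraph} (hs : H.IsSpanning) (ht' : H.coe.IsTree)

/-- The unique path from a vertex to the hub in a spanning tree. -/
noncomputable def pw (x : Option (Fin n)) : H.coe.Walk ⟨x, hs x⟩ ⟨none, hs none⟩ :=
  (ht'.existsUnique_path ⟨x, hs x⟩ ⟨none, hs none⟩).choose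

lemma pw_isPath (x : Option (Fin n)) : (pw hs ht' x).IsPath :=
  (ht'.existsUnique_path _ _).choose_spec.1

lemma pw_unique {x : Option (Fin n)} (q : H.coe.Walk ⟨x, hs x⟩ ⟨none, hs none⟩)
    (hq : q.IsPath) : q = pw hs ht' x :=
  ((ht'.existsUnique_path _ _).choose_spec.2 q hq)

lemma pw_none : pw hs ht' none = Walk.nil := (pw_unique hs ht' Walk.nil (by simp)).symm

/-- The second vertex on the path from `some i` to the hub. -/
noncomputable def gv (i : Fin n) : Option (Fin n) :=
  ((pw hs ht' (some i)).getVert 1).val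

lemma pw_coe_adj (i : Fin n) :
    H.coe.Adj ⟨some i, hs _⟩ ((pw hs ht' (some i)).getVert 1) := by
  have hne : (⟨some i, hs _⟩ : H.verts) ≠ ⟨none, hs none⟩ := by
    intro h; simpa using congrArg Subtype.val h
  have hlen : 0 < (pw hs ht' (some i)).length := by
    rcases Nat.eq_zero_or_pos (pw hs ht' (some i)).length with h | h
    · exact absurd (Walk.eq_of_length_eq_zero h) hne
    · exact h
  have := (pw hs ht' (some i)).adj_getVert_succ hlen
  simpa using this

lemma gv_adj (i : Fin n) : H.Adj (some i) (gv hs ht' i) := by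
  have := pw_coe_adj hs ht' i
  exact this

lemma gv_cases (i : Fin n) :
    gv hs ht' i = none ∨
      ∃ j : Fin n, gv hs ht' i = some j ∧ ((i : ℕ) + 1 = (j : ℕ) ∨ (j : ℕ) + 1 = (i : ℕ)) :=
  fan_adj_classify (H.adj_sub (gv_adj hs ht' i))

/-- Extract the parent direction function from a spanning tree. -/
noncomputable def extract : Fin n → Dir := fun i =>
  match gv hs ht' i with
  | none => Dir.hub
  | some j => if (i : ℕ) < (j : ℕ) then Dir.right else Dir.left

lemma target_extract (i : Fin n) : target (extract hs ht') i = gv hs ht' i := by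
  rcases gv_cases hs ht' i with h | ⟨j, h, hj | hj⟩
  · unfold target extract
    rw [h]
  · -- right
    have hd : extract hs ht' i = Dir.right := by unfold extract; rw [h]; simp [if_pos]; omega
    rw [target_of_right hd (by have := j.isLt; omega), h]
    congr 1
    exact Fin.ext (by simp [hj])
  · -- left
    have hd : extract hs ht' i = Dir.left := by
      unfold extract; rw [h]
      have : ¬ (i : ℕ) < (j : ℕ) := by omega
      simp [this]
    rw [target_of_left hd (by omega), h]
    congr 1
    exact Fin.ext (by simp; omega)

lemma pw_length_pos (i : Fin n) : 0 < (pw hs ht' (some i)).length := by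
  rcases Nat.eq_zero_or_pos (pw hs ht' (some i)).length with h | h
  · have := Walk.eq_of_length_eq_zero h
    simpa using congrArg Subtype.val this
  · exact h

lemma pw_not_mem_of_gv {i j : Fin n} (h : gv hs ht' i = some j) :
    (⟨some i, hs (some i)⟩ : H.verts) ∉ (pw hs ht' (some j)).support := by
  have hne : (⟨some i, hs _⟩ : H.verts) ≠ ⟨none, hs none⟩ := by
    intro hx; simpa using congrArg Subtype.val hx
  obtain ⟨w, hadj, q, hq⟩ := Walk.exists_eq_cons_of_ne hne (pw hs ht' (some i))
  have hw : w = ⟨some j, hs (some j)⟩ := by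
    apply Subtype.ext
    have : ((pw hs ht' (some i)).getVert 1).val = some j := h
    rw [hq] at this
    simpa using this
  subst hw
  have hqpath : q.IsPath := by
    have := pw_isPath hs ht' (some i)
    rw [hq] at this
    exact this.of_cons
  have hqe : q = pw hs ht' (some j) := pw_unique hs ht' q hqpath
  have hnd := (pw_isPath hs ht' (some i)).support_nodup
  rw [hq, Walk.support_cons, List.nodup_cons] at hnd
  rw [← hqe]
  exact hnd.1

lemma getVert1_mem_support (i : Fin n) :
    (pw hs ht' (some i)).getVert 1 ∈ (pw hs ht' (some i)).support := by
  rw [Walk.mem_support_iff_exists_getVert]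
  exact ⟨1, rfl, pw_length_pos hs ht' i⟩

lemma extract_valid : Valid n (extract hs ht') := by
  refine ⟨?_, ?_, ?_⟩
  · intro i hd
    rcases gv_cases hs ht' i with h | ⟨j, h, hj | hj⟩
    · unfold extract at hd; rw [h] at hd; simp at hd
    · unfold extract at hd; rw [h] at hd; simp [show (i : ℕ) < (j : ℕ) by omega] at hd
    · omega
  · intro i hd
    rcases gv_cases hs ht' i with h | ⟨j, h, hj | hj⟩
    · unfold extract at hd; rw [h] at hd; simp at hd
    · have := j.isLt; omega
    · unfold extract at hd; rw [h] at hd; simp [show ¬ (i : ℕ) < (j : ℕ) by omega] at hd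
  · rintro i j hij ⟨hdi, hdj⟩
    have hgi : gv hs ht' i = some j := by
      have := target_extract hs ht' i
      rw [target_of_right hdi (by have := j.isLt; omega)] at this
      rw [← this]
      congr 1
      exact Fin.ext (by simp [hij])
    have hgj : gv hs ht' j = some i := by
      have := target_extract hs ht' j
      rw [target_of_left hdj (by omega)] at this
      rw [← this]
      congr 1
      exact Fin.ext (by simp; omega)
    apply pw_not_mem_of_gv hs ht' hgi
    have : ((pw hs ht' (some j)).getVert 1) = ⟨some i, hs (some i)⟩ := Subtype.ext hgj
    rw [← this]
    exact getVert1_mem_support hs ht' j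

lemma tree_edge_aux {x y : Option (Fin n)} (hxy : H.Adj x y)
    (hmem : (⟨x, hs x⟩ : H.verts) ∉ (pw hs ht' y).support) :
    ∃ i : Fin n, x = some i ∧ gv hs ht' i = y := by
  have hw : (Walk.cons hxy.coe (pw hs ht' y)).IsPath := by
    rw [Walk.cons_isPath_iff]
    exact ⟨pw_isPath hs ht' y, hmem⟩
  have heq := pw_unique hs ht' _ hw
  rcases x with _ | i
  · exfalso
    have := congrArg Walk.length heq
    rw [pw_none hs ht'] at this
    simp at this
  · refine ⟨i, rfl, ?_⟩
    unfold gv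
    rw [← heq]
    simp

lemma tree_edge {x y : Option (Fin n)} (hxy : H.Adj x y) :
    (∃ i : Fin n, x = some i ∧ gv hs ht' i = y) ∨
      (∃ j : Fin n, y = some j ∧ gv hs ht' j = x) := by
  by_cases hmem : (⟨x, hs x⟩ : H.verts) ∈ (pw hs ht' y).support
  · right
    apply tree_edge_aux hs ht' hxy.symm
    have hdrop : ((pw hs ht' y).dropUntil _ hmem).IsPath :=
      (pw_isPath hs ht' y).dropUntil hmem
    have heq : (pw hs ht' y).dropUntil _ hmem = pw hs ht' x := pw_unique hs ht' _ hdrop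
    rw [← heq]
    -- y is not in the dropUntil part
    have hspec := Walk.take_spec (pw hs ht' y) hmem
    have hnd := (pw_isPath hs ht' y).support_nodup
    rw [← hspec, Walk.support_append] at hnd
    have hhead : ((pw hs ht' y).takeUntil _ hmem).support =
        (⟨y, hs y⟩ : H.verts) :: ((pw hs ht' y).takeUntil _ hmem).support.tail :=
      Walk.support_eq_cons _
    rw [hhead, List.cons_append, List.nodup_cons] at hnd
    intro hymem
    rw [Walk.support_eq_cons, List.mem_cons] at hymem
    rcases hymem with hxy' | hymem
    · exact hxy.ne (by simpa using (congrArg Subtype.val hxy').symm)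
    · exact hnd.1 (List.mem_append_right _ hymem)
  · exact Or.inl (tree_edge_aux hs ht' hxy hmem)

lemma parSubgraph_extract : parSubgraph (extract_valid hs ht') = H := by
  apply SimpleGraph.Subgraph.ext
  · exact (Set.eq_univ_of_forall hs).symm
  · ext x y
    constructor
    · rintro (⟨i, rfl, rfl⟩ | ⟨i, rfl, rfl⟩)
      · rw [target_extract]
        exact gv_adj hs ht' i
      · rw [target_extract]
        exact (gv_adj hs ht' i).symm
    · intro h
      rcases tree_edge hs ht' h with ⟨i, rfl, hgv⟩ | ⟨j, rfl, hgv⟩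
      · exact Or.inl ⟨i, rfl, by rw [target_extract, hgv]⟩
      · exact Or.inr ⟨j, rfl, by rw [target_extract, hgv]⟩

end Extract

section RT1

variable {f : Fin n → Dir} (hf : Valid n f)

lemma extract_parSubgraph :
    extract (parSubgraph_isSpanning hf) (parSubgraph_isTree hf) = f := by
  funext i
  have hgv : gv (parSubgraph_isSpanning hf) (parSubgraph_isTree hf) i = target f i := by
    obtain ⟨w, hwp, -, hw1⟩ := exists_path_to_hub hf (some i)
    have heq := pw_unique (parSubgraph_isSpanning hf) (parSubgraph_isTree hf) w hwp
    unfold gv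
    rw [← heq, hw1 i rfl]
  unfold extract
  rw [hgv]
  rcases hd : f i with _ | _ | _
  · rw [target_of_hub hd]
  · rw [target_of_left hd (hf.1 i hd)]
    simp only
    rw [if_neg (by simp)]
  · rw [target_of_right hd (hf.2.1 i hd)]
    simp only
    rw [if_pos (by simp)]

end RT1

noncomputable def treeEquiv (n : ℕ) :
    {f : Fin n → Dir // Valid n f} ≃
      {H : (fanGraph n).Subgraph // H.IsSpanning ∧ H.coe.IsTree} where
  toFun := fun p => ⟨parSubgraph p.2, parSubgraph_isSpanning p.2, parSubgraph_isTree p.2⟩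
  invFun := fun q => ⟨extract q.2.1 q.2.2, extract_valid q.2.1 q.2.2⟩
  left_inv := fun p => Subtype.ext (extract_parSubgraph p.2)
  right_inv := fun q => Subtype.ext (parSubgraph_extract q.2.1 q.2.2)

section Counting

/-- The predicate without the "last is not right" condition. -/
def W (n : ℕ) (f : Fin n → Dir) : Prop :=
  (∀ i : Fin n, f i = .left → 0 < (i : ℕ)) ∧
  (∀ i j : Fin n, (i : ℕ) + 1 = (j : ℕ) → ¬(f i = .right ∧ f j = .left))

instance (n : ℕ) : DecidablePred (W n) := fun _ => by unfold W; infer_instance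

instance (n : ℕ) : DecidablePred (Valid n) := fun _ => by unfold Valid; infer_instance

lemma W_snoc {m : ℕ} (g : Fin (m + 1) → Dir) (d : Dir) :
    W (m + 2) (Fin.snoc g d) ↔
      W (m + 1) g ∧ ¬(g (Fin.last m) = .right ∧ d = .left) := by
  constructor
  · rintro ⟨h1, h3⟩
    refine ⟨⟨fun k hk => ?_, fun k l hkl hc => ?_⟩, fun hc => ?_⟩
    · have := h1 (Fin.castSucc k) (by rwa [Fin.snoc_castSucc])
      simpa using this
    · refine h3 (Fin.castSucc k) (Fin.castSucc l) (by simpa using hkl) ?_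
      rwa [Fin.snoc_castSucc, Fin.snoc_castSucc]
    · refine h3 (Fin.castSucc (Fin.last m)) (Fin.last (m + 1)) (by simp) ?_
      rwa [Fin.snoc_castSucc, Fin.snoc_last]
  · rintro ⟨⟨h1, h3⟩, hlast⟩
    refine ⟨fun i => ?_, fun i j hij hc => ?_⟩
    · induction i using Fin.lastCases with
      | last => intro _; simp
      | cast k =>
        intro hk
        rw [Fin.snoc_castSucc] at hk
        simpa using h1 k hk
    · have hj : (j : ℕ) < m + 2 := j.isLt
      by_cases hjl : j = Fin.last (m + 1)
      · subst hjl
        have hi : i = Fin.castSucc (Fin.last m) := by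
          apply Fin.ext; simp at hij ⊢; omega
        subst hi
        rw [Fin.snoc_castSucc, Fin.snoc_last] at hc
        exact hlast hc
      · have hjv : (j : ℕ) < m + 1 := by
          rcases Nat.lt_or_ge (j : ℕ) (m + 1) with h | h
          · exact h
          · exact absurd (Fin.ext (by simp; omega)) hjl
        have hiv : (i : ℕ) < m + 1 := by omega
        have hi : i = Fin.castSucc ⟨(i : ℕ), hiv⟩ := Fin.ext (by simp)
        have hj' : j = Fin.castSucc ⟨(j : ℕ), hjv⟩ := Fin.ext (by simp)
        rw [hi, hj'] at hc
        rw [Fin.snoc_castSucc, Fin.snoc_castSucc] at hc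
        exact h3 _ _ (by simpa using hij) hc

open Finset in
/-- counts of `W`-strings with given last letter -/
def cntD (n : ℕ) (d : Dir) : ℕ :=
  #(univ.filter fun f : Fin (n + 1) → Dir => W (n + 1) f ∧ f (Fin.last n) = d)

open Finset in
def tot (n : ℕ) : ℕ := #(univ.filter fun f : Fin (n + 1) → Dir => W (n + 1) f)

open Finset in
def notR (n : ℕ) : ℕ :=
  #(univ.filter fun f : Fin (n + 1) → Dir => W (n + 1) f ∧ f (Fin.last n) ≠ .right)

end Counting

section Recurrences
open Finset

lemma cntD_succ (n : ℕ) (d : Dir) :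
    cntD (n + 1) d =
      #(univ.filter fun g : Fin (n + 1) → Dir =>
        W (n + 1) g ∧ ¬(g (Fin.last n) = .right ∧ d = .left)) := by
  unfold cntD
  apply card_nbij' (fun f => Fin.init f) (fun g => Fin.snoc g d)
  · intro f hf
    rw [mem_coe, mem_filter] at hf ⊢
    obtain ⟨-, hW, hl⟩ := hf
    have hfs : f = Fin.snoc (Fin.init f) (f (Fin.last (n + 1))) := (Fin.snoc_init_self f).symm
    rw [hfs, W_snoc] at hW
    exact ⟨mem_univ _, hW.1, by rw [← hl]; exact hW.2⟩
  · intro g hg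
    rw [mem_coe, mem_filter] at hg ⊢
    obtain ⟨-, hW, hc⟩ := hg
    refine ⟨mem_univ _, ?_, by simp⟩
    rw [W_snoc]
    exact ⟨hW, hc⟩
  · intro f hf
    rw [mem_coe, mem_filter] at hf
    rw [← hf.2.2]
    exact Fin.snoc_init_self f
  · intro g _
    simp

lemma notR_split (n : ℕ) : notR n = cntD n .hub + cntD n .left := by
  unfold notR cntD
  rw [← card_filter_add_card_filter_not
    (p := fun f : Fin (n + 1) → Dir => f (Fin.last n) = Dir.hub), filter_filter, filter_filter]
  congr 1
  · apply congrArg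
    apply filter_congr
    intro f _
    cases hv : f (Fin.last n) <;> simp [hv]
  · apply congrArg
    apply filter_congr
    intro f _
    cases hv : f (Fin.last n) <;> simp [hv]

lemma tot_split (n : ℕ) : tot n = notR n + cntD n .right := by
  unfold tot notR cntD
  rw [← card_filter_add_card_filter_not
    (p := fun f : Fin (n + 1) → Dir => f (Fin.last n) ≠ Dir.right), filter_filter, filter_filter]
  congr 1
  apply congrArg
  apply filter_congr
  intro f _
  cases hv : f (Fin.last n) <;> simp [hv]

lemma cntD_hub_succ (n : ℕ) : cntD (n + 1) .hub = tot n := by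
  rw [cntD_succ]
  unfold tot
  apply congrArg
  apply filter_congr
  intro f _
  simp

lemma cntD_right_succ (n : ℕ) : cntD (n + 1) .right = tot n := by
  rw [cntD_succ]
  unfold tot
  apply congrArg
  apply filter_congr
  intro f _
  simp

lemma cntD_left_succ (n : ℕ) : cntD (n + 1) .left = notR n := by
  rw [cntD_succ]
  unfold notR
  apply congrArg
  apply filter_congr
  intro f _
  simp

lemma notR_succ (n : ℕ) : notR (n + 1) = tot n + notR n := by
  rw [notR_split, cntD_hub_succ, cntD_left_succ]

lemma tot_succ (n : ℕ) : tot (n + 1) = 2 * tot n + notR n := by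
  rw [tot_split, notR_succ, cntD_right_succ]; ring

lemma notR_zero : notR 0 = 1 := by decide
lemma tot_zero : tot 0 = 2 := by decide

lemma notR_rec (n : ℕ) : notR (n + 2) + notR n = 3 * notR (n + 1) := by
  rw [notR_succ, tot_succ, notR_succ]
  ring

end Recurrences

lemma valid_iff (m : ℕ) (f : Fin (m + 1) → Dir) :
    Valid (m + 1) f ↔ W (m + 1) f ∧ f (Fin.last m) ≠ .right := by
  constructor
  · rintro ⟨h1, h2, h3⟩
    refine ⟨⟨h1, h3⟩, fun hc => ?_⟩
    have := h2 _ hc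
    simp at this
  · rintro ⟨⟨h1, h3⟩, hl⟩
    refine ⟨h1, fun i hi => ?_, h3⟩
    have : i ≠ Fin.last m := fun hc => hl (hc ▸ hi)
    have : (i : ℕ) ≠ m := fun hc => this (Fin.ext (by simp [hc]))
    have := i.isLt
    omega

lemma card_valid (m : ℕ) :
    Nat.card {f : Fin (m + 1) → Dir // Valid (m + 1) f} = notR m := by
  rw [Nat.card_eq_fintype_card, Fintype.card_subtype]
  unfold notR
  apply congrArg
  apply Finset.filter_congr
  intro f _
  exact valid_iff m f

end Fan

noncomputable def fanTreeCount (n : ℕ) : ℕ :=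
  Nat.card {H : (fanGraph n).Subgraph // H.IsSpanning ∧ H.coe.IsTree}

lemma fanTreeCount_eq (m : ℕ) : fanTreeCount (m + 1) = Fan.notR m := by
  rw [fanTreeCount, ← Nat.card_congr (Fan.treeEquiv (m + 1)), Fan.card_valid m]

theorem fan_tree_recurrence :
    fanTreeCount 1 = 1 ∧ fanTreeCount 2 = 3 ∧
      ∀ n : ℕ, 3 ≤ n →
        (fanTreeCount n : ℤ) = 3 * fanTreeCount (n - 1) - fanTreeCount (n - 2) := by
  refine ⟨?_, ?_, ?_⟩
  · rw [show (1 : ℕ) = 0 + 1 from rfl, fanTreeCount_eq, Fan.notR_zero]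
  · rw [show (2 : ℕ) = 1 + 1 from rfl, fanTreeCount_eq, Fan.notR_succ, Fan.notR_zero,
      Fan.tot_zero]
  · intro n hn
    obtain ⟨k, rfl⟩ : ∃ k, n = k + 3 := ⟨n - 3, by omega⟩
    have h1 : k + 3 - 1 = (k + 1) + 1 := by omega
    have h2 : k + 3 - 2 = k + 1 := by omega
    have h3 : k + 3 = (k + 2) + 1 := by omega
    rw [h1, h2, h3, fanTreeCount_eq, fanTreeCount_eq]
    rw [show k + 1 = k + 1 from rfl]
    rcases k with _ | k'
    · rw [show (0:ℕ) + 1 = 0 + 1 from rfl, fanTreeCount_eq]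
      have := Fan.notR_rec 0
      omega
    · rw [show k' + 1 + 1 = k' + 1 + 1 from rfl, fanTreeCount_eq]
      have := Fan.notR_rec (k' + 1)
      omega
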